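/- Suppose positive integers n, l, k, m with l ≥ 3, m ≥ 2 satisfy F_n = F_l^k * (F_l^m - 1). Then 0 < 1 - φ^n * 5^(-1/2) * F_l^(-(k+m)) < 1.03 / F_l^m, where φ = (1+√5)/2. -/

import Mathlib

open Real

private lemma lfb_aux (x p q s : ℝ) (hs : s ≠ 0) (hp : p ≠ 0) (hq : q ≠ 0) :
    1 - (s * (p * (q - 1)) + x) * s⁻¹ * (p * q)⁻¹ = (p - x * s⁻¹) / (p * q) := by
  field_simp
  ring

set_option maxHeartbeats 1000000 in
theorem linear_form_bound_one (n l k m : ℕ)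
    (hn : 1 ≤ n) (hl : 3 ≤ l) (hk : 1 ≤ k) (hm : 2 ≤ m)
    (heq : Nat.fib n = Nat.fib l ^ k * (Nat.fib l ^ m - 1)) :
    0 < 1 - goldenRatio ^ n * (Real.sqrt 5)⁻¹ * (Nat.fib l : ℝ) ^ (-((k : ℤ) + m)) ∧
      1 - goldenRatio ^ n * (Real.sqrt 5)⁻¹ * (Nat.fib l : ℝ) ^ (-((k : ℤ) + m)) <
        1.03 / (Nat.fib l : ℝ) ^ m := by
  -- basic facts
  have hF2 : 2 ≤ Nat.fib l := by
    calc 2 = Nat.fib 3 := by decide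
    _ ≤ Nat.fib l := Nat.fib_mono hl
  have hFm4 : 4 ≤ Nat.fib l ^ m := by
    calc 4 = 2 ^ 2 := by norm_num
    _ ≤ 2 ^ m := Nat.pow_le_pow_right (by norm_num) hm
    _ ≤ Nat.fib l ^ m := Nat.pow_le_pow_left hF2 m
  have hFk2 : 2 ≤ Nat.fib l ^ k := by
    calc 2 ≤ Nat.fib l := hF2
    _ = Nat.fib l ^ 1 := (pow_one _).symm
    _ ≤ Nat.fib l ^ k := Nat.pow_le_pow_right (by omega) hk
  have hfibn : 6 ≤ Nat.fib n := by
    rw [heq]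
    calc 6 = 2 * 3 := by norm_num
    _ ≤ Nat.fib l ^ k * (Nat.fib l ^ m - 1) := Nat.mul_le_mul hFk2 (by omega)
  have hn6 : 6 ≤ n := by
    by_contra h
    push_neg at h
    have h1 : Nat.fib n ≤ Nat.fib 5 := Nat.fib_mono (by omega)
    have h2 : Nat.fib 5 = 5 := by decide
    omega
  -- real facts
  have hs2 : Real.sqrt 5 ^ 2 = 5 := Real.sq_sqrt (by norm_num)
  have hs_lb : (2.2360 : ℝ) < Real.sqrt 5 := by nlinarith [Real.sqrt_nonneg 5]
  have hs_ub : Real.sqrt 5 < 2.2361 := by nlinarith [Real.sqrt_nonneg 5]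
  have hs_pos : (0 : ℝ) < Real.sqrt 5 := by linarith
  have hFlk2 : (2 : ℝ) ≤ (Nat.fib l : ℝ) ^ k := by exact_mod_cast hFk2
  have hFlm4 : (4 : ℝ) ≤ (Nat.fib l : ℝ) ^ m := by exact_mod_cast hFm4
  have hFlk_pos : (0 : ℝ) < (Nat.fib l : ℝ) ^ k := by linarith
  have hFlm_pos : (0 : ℝ) < (Nat.fib l : ℝ) ^ m := by linarith
  -- identity over ℝ
  have hone : 1 ≤ Nat.fib l ^ m := by omega
  have heqR : (Nat.fib n : ℝ) = (Nat.fib l : ℝ) ^ k * ((Nat.fib l : ℝ) ^ m - 1) := by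
    rw [heq]
    push_cast [Nat.cast_sub hone]
    ring
  -- Binet
  have hbinet : goldenRatio ^ n = Real.sqrt 5 * (Nat.fib n : ℝ) + goldenConj ^ n := by
    have h := Real.coe_fib_eq n
    rw [eq_div_iff (ne_of_gt hs_pos)] at h
    linear_combination -h
  -- zpow rewrite
  have hzpow : (Nat.fib l : ℝ) ^ (-((k : ℤ) + m))
      = ((Nat.fib l : ℝ) ^ k * (Nat.fib l : ℝ) ^ m)⁻¹ := by
    rw [show -((k : ℤ) + m) = -((k + m : ℕ) : ℤ) by push_cast; ring,
      zpow_neg, zpow_natCast, pow_add]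
  have hE : 1 - goldenRatio ^ n * (Real.sqrt 5)⁻¹ * (Nat.fib l : ℝ) ^ (-((k : ℤ) + m))
      = ((Nat.fib l : ℝ) ^ k - goldenConj ^ n * (Real.sqrt 5)⁻¹)
        / ((Nat.fib l : ℝ) ^ k * (Nat.fib l : ℝ) ^ m) := by
    rw [hzpow, hbinet, heqR]
    exact lfb_aux _ _ _ _ (ne_of_gt hs_pos) (ne_of_gt hFlk_pos) (ne_of_gt hFlm_pos)
  -- bound on goldenConj ^ n
  have hpsi_neg : goldenConj < 0 := goldenConj_neg
  have habs : |goldenConj| ≤ 0.62 := by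
    rw [abs_of_neg hpsi_neg]
    have h : goldenConj = (1 - Real.sqrt 5) / 2 := rfl
    rw [h]; nlinarith
  have habs_pow : |goldenConj ^ n| ≤ 0.62 ^ 6 := by
    rw [abs_pow]
    calc |goldenConj| ^ n ≤ 0.62 ^ n := pow_le_pow_left₀ (abs_nonneg _) habs n
    _ ≤ 0.62 ^ 6 := pow_le_pow_of_le_one (by norm_num) (by norm_num) hn6
  obtain ⟨hpsi_lb, hpsi_ub⟩ := abs_le.mp habs_pow
  rw [hE]
  generalize hx : goldenConj ^ n = x at hpsi_lb hpsi_ub ⊢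
  generalize hp : ((Nat.fib l : ℝ)) ^ k = p at hFlk2 ⊢
  generalize hq : ((Nat.fib l : ℝ)) ^ m = q at hFlm4 ⊢
  generalize hsg : Real.sqrt 5 = s at hs_lb hs_ub hs_pos hs2 ⊢
  clear hE hbinet hzpow heqR heq hfibn hone habs habs_pow hpsi_neg hF2 hFm4 hFk2 hFlk_pos hFlm_pos hx hp hq hsg hs2
  have hsi_pos : (0 : ℝ) < s⁻¹ := by positivity
  have hsi : s * s⁻¹ = 1 := mul_inv_cancel₀ (ne_of_gt hs_pos)
  have hsi_lt : s⁻¹ < 0.5 := by nlinarith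
  have hx_lb : -(0.057 : ℝ) ≤ x := by nlinarith
  have hx_ub : x ≤ (0.057 : ℝ) := by nlinarith
  have hterm_lb : -(0.03 : ℝ) < x * s⁻¹ := by nlinarith
  have hterm_ub : x * s⁻¹ < (0.03 : ℝ) := by nlinarith
  have hq_pos : (0 : ℝ) < q := by linarith
  have hprod_pos : (0 : ℝ) < p * q := by nlinarith
  constructor
  · apply div_pos _ hprod_pos
    linarith
  · rw [div_lt_div_iff₀ hprod_pos hq_pos]
    nlinarith [mul_pos (show (0:ℝ) < x * s⁻¹ + 0.03 by linarith) hq_pos,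
      mul_le_mul_of_nonneg_right hFlk2 hq_pos.le]
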